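/- arXiv:0705.0603 — 2 statements merged into one kernel-verified Lean document; each statement's English description precedes it below -/
import Mathlib

section
/- Consider the quadratic cone S: y^2 = x_1 x_2 in ℂ^{d+1} with d > 2. Its semigroup is Λ = {(a_1, a_2, a_3, …, a_d) ∈ ℤ_{≥0}^d : a_1 ≡ a_2 mod 2}. For the two vectors w_1 = (1/2)(e_1^* + e_2^*) (valued in ℤ on Λ) and w_2 = w_1 + e_3^* + ⋯ + e_d^*, the two-variable Poincaré series ∑_{u ∈ Λ} t_1^{⟨w_1,u⟩} t_2^{⟨w_2,u⟩} equals (1 − t_1^2 t_2^2)/((1 − t_1 t_2)^3 (1 − t_2)^{d−2}). -/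
open Finset MvPowerSeries


def mySet (k a0 a1 : ℕ) : Set (Fin (k + 3) → ℕ) :=
  {u : Fin (k + 3) → ℕ |
    u 0 + u 1 = 2 * a0 ∧
    a0 + ∑ i ∈ Finset.univ.filter (fun i : Fin (k + 3) => 2 ≤ (i : ℕ)), u i = a1}

lemma ssum (k : ℕ) (v : Fin (k + 4) → ℕ) :
    ∑ i ∈ Finset.univ.filter (fun i : Fin (k + 4) => 2 ≤ (i : ℕ)), v i
      = (∑ i ∈ Finset.univ.filter (fun i : Fin (k + 3) => 2 ≤ (i : ℕ)), v (Fin.castSucc i))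
        + v (Fin.last (k + 3)) := by
  rw [Finset.sum_filter, Finset.sum_filter, Fin.sum_univ_castSucc]
  simp [Fin.val_last]

lemma finite_mySet (k a0 a1 : ℕ) : (mySet k a0 a1).Finite := by
  apply Set.Finite.subset (Set.finite_Icc (0 : Fin (k+3) → ℕ) (fun _ => 2*a0 + a1))
  rintro u ⟨h1, h2⟩
  constructor
  · intro i; exact Nat.zero_le _
  · intro i
    show u i ≤ 2*a0 + a1
    by_cases hi : 2 ≤ (i : ℕ)
    · have : u i ≤ ∑ j ∈ Finset.univ.filter (fun j : Fin (k + 3) => 2 ≤ (j : ℕ)), u j :=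
        Finset.single_le_sum (fun j _ => Nat.zero_le _) (by simp [hi])
      omega
    · have h0 : (0 : Fin (k+3)).val = 0 := rfl
      have h1' : (1 : Fin (k+3)).val = 1 := rfl
      have hi2 : (i:ℕ) = 0 ∨ (i:ℕ) = 1 := by omega
      have : i = 0 ∨ i = 1 := by
        rcases hi2 with h | h
        · exact Or.inl (Fin.ext (by omega))
        · exact Or.inr (Fin.ext (by omega))
      rcases this with rfl | rfl <;> omega

lemma snoc_zero' (k : ℕ) (v : Fin (k+3) → ℕ) (c : ℕ) :
    (Fin.snoc v c : Fin (k+4) → ℕ) 0 = v 0 := by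
  rw [show (0 : Fin (k+4)) = Fin.castSucc 0 by rfl, Fin.snoc_castSucc]

lemma snoc_one' (k : ℕ) (v : Fin (k+3) → ℕ) (c : ℕ) :
    (Fin.snoc v c : Fin (k+4) → ℕ) 1 = v 1 := by
  rw [show (1 : Fin (k+4)) = Fin.castSucc 1 by rfl, Fin.snoc_castSucc]

lemma update_ne_last (k : ℕ) (u : Fin (k+4) → ℕ) (c : ℕ) (i : Fin (k+4)) (hi : i ≠ Fin.last (k+3)) :
    Function.update u (Fin.last (k+3)) c i = u i := Function.update_of_ne hi _ _

lemma mem_mySet_snoc (k a0 a1 : ℕ) (v : Fin (k+3) → ℕ) :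
    (Fin.snoc v 0 : Fin (k+4) → ℕ) ∈ mySet (k+1) a0 a1 ↔ v ∈ mySet k a0 a1 := by
  unfold mySet
  rw [Set.mem_setOf_eq, Set.mem_setOf_eq, ssum]
  simp [snoc_zero', snoc_one', Fin.snoc_castSucc, Fin.snoc_last]

lemma mem_mySet_update (k a0 a1 : ℕ) (u : Fin (k+4) → ℕ) :
    Function.update u (Fin.last (k+3)) (u (Fin.last (k+3)) + 1) ∈ mySet (k+1) a0 (a1+1)
      ↔ u ∈ mySet (k+1) a0 a1 := by
  unfold mySet
  rw [Set.mem_setOf_eq, Set.mem_setOf_eq, ssum, ssum]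
  have h0 : (0 : Fin (k+4)) ≠ Fin.last (k+3) := by
    intro h
    have : (0:ℕ) = k+3 := by simpa [Fin.ext_iff, Fin.val_last] using h
    omega
  have h1 : (1 : Fin (k+4)) ≠ Fin.last (k+3) := by
    intro h
    have : (1:ℕ) = k+3 := by simpa [Fin.ext_iff, Fin.val_last] using h
    omega
  have hc : ∀ i : Fin (k+3), Fin.castSucc i ≠ Fin.last (k+3) := fun i => (Fin.castSucc_lt_last i).ne
  rw [update_ne_last _ _ _ _ h0, update_ne_last _ _ _ _ h1, Function.update_self]
  have : ∀ i : Fin (k+3),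
      Function.update u (Fin.last (k+3)) (u (Fin.last (k+3)) + 1) (Fin.castSucc i) = u (Fin.castSucc i) :=
    fun i => update_ne_last _ _ _ _ (hc i)
  rw [Finset.sum_congr rfl (fun i _ => this i)]
  omega

lemma mySet_last_zero (k a0 a1 : ℕ) (u : Fin (k+4) → ℕ) (hu : u ∈ mySet (k+1) a0 a1)
    (hlast : u (Fin.last (k+3)) = 0) :
    u ∈ (fun v => (Fin.snoc v 0 : Fin (k+4) → ℕ)) '' mySet k a0 a1 := by
  have heq : (Fin.snoc (Fin.init u) 0 : Fin (k+4) → ℕ) = u := by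
    rw [← hlast]; exact Fin.snoc_init_self u
  refine ⟨Fin.init u, ?_, heq⟩
  rw [← mem_mySet_snoc]
  rwa [heq]

lemma mySet_zero_eq (k a0 : ℕ) :
    mySet (k+1) a0 0 = (fun v => (Fin.snoc v 0 : Fin (k+4) → ℕ)) '' mySet k a0 0 := by
  ext u
  constructor
  · intro hu
    have h2 := hu.2
    rw [ssum k u] at h2
    exact mySet_last_zero k a0 0 u hu (by omega)
  · rintro ⟨v, hv, rfl⟩
    exact (mem_mySet_snoc k a0 0 v).2 hv

lemma mySet_succ_eq (k a0 a1 : ℕ) :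
    mySet (k+1) a0 (a1+1)
      = (fun v => (Fin.snoc v 0 : Fin (k+4) → ℕ)) '' mySet k a0 (a1+1)
        ∪ (fun u => Function.update u (Fin.last (k+3)) (u (Fin.last (k+3)) + 1)) '' mySet (k+1) a0 a1 := by
  ext u
  constructor
  · intro hu
    by_cases hlast : u (Fin.last (k+3)) = 0
    · exact Or.inl (mySet_last_zero k a0 (a1+1) u hu hlast)
    · right
      obtain ⟨m, hm⟩ : ∃ m, u (Fin.last (k+3)) = m + 1 :=
        ⟨u (Fin.last (k+3)) - 1, by omega⟩
      set u' := Function.update u (Fin.last (k+3)) m with hu'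
      have hback : Function.update u' (Fin.last (k+3)) (u' (Fin.last (k+3)) + 1) = u := by
        funext i
        by_cases hi : i = Fin.last (k+3)
        · subst hi; simp [hu', hm]
        · simp [hu', Function.update_of_ne hi]
      refine ⟨u', ?_, hback⟩
      rw [← mem_mySet_update]
      rwa [hback]
  · rintro (⟨v, hv, rfl⟩ | ⟨w, hw, rfl⟩)
    · exact (mem_mySet_snoc k a0 (a1+1) v).2 hv
    · exact (mem_mySet_update k a0 a1 w).2 hw

lemma snoc_inj (k : ℕ) : Function.Injective (fun v : Fin (k+3) → ℕ => (Fin.snoc v 0 : Fin (k+4) → ℕ)) := by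
  intro a b h
  have := congrArg Fin.init h
  simpa [Fin.init_snoc] using this

lemma update_inj (k : ℕ) :
    Function.Injective (fun u : Fin (k+4) → ℕ =>
      Function.update u (Fin.last (k+3)) (u (Fin.last (k+3)) + 1)) := by
  intro a b h
  funext i
  by_cases hi : i = Fin.last (k+3)
  · subst hi
    have := congrFun h (Fin.last (k+3))
    simpa using this
  · have := congrFun h i
    simpa [Function.update_of_ne hi] using this

lemma card_zero (k a0 : ℕ) : (mySet (k+1) a0 0).ncard = (mySet k a0 0).ncard := by
  rw [mySet_zero_eq, Set.ncard_image_of_injective _ (snoc_inj k)]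

lemma card_succ (k a0 a1 : ℕ) :
    (mySet (k+1) a0 (a1+1)).ncard = (mySet k a0 (a1+1)).ncard + (mySet (k+1) a0 a1).ncard := by
  have hd : Disjoint
      ((fun v => (Fin.snoc v 0 : Fin (k+4) → ℕ)) '' mySet k a0 (a1+1))
      ((fun u => Function.update u (Fin.last (k+3)) (u (Fin.last (k+3)) + 1)) '' mySet (k+1) a0 a1) := by
    rw [Set.disjoint_left]
    rintro u ⟨v, _, rfl⟩ ⟨w, _, hw⟩
    have h1 : (Fin.snoc v 0 : Fin (k+4) → ℕ) (Fin.last (k+3)) = 0 := Fin.snoc_last _ _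
    have h2 := congrFun hw (Fin.last (k+3))
    simp only [Function.update_self] at h2
    omega
  rw [mySet_succ_eq, Set.ncard_union_eq hd ((finite_mySet k a0 (a1+1)).image _)
      ((finite_mySet (k+1) a0 a1).image _),
    Set.ncard_image_of_injective _ (snoc_inj k), Set.ncard_image_of_injective _ (update_inj k)]

lemma filter_fin3 : Finset.univ.filter (fun i : Fin 3 => 2 ≤ (i : ℕ)) = {2} := by decide

lemma mem_mySet_zero (a0 a1 : ℕ) (u : Fin 3 → ℕ) :
    u ∈ mySet 0 a0 a1 ↔ u 0 + u 1 = 2 * a0 ∧ a0 + u 2 = a1 := by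
  unfold mySet
  rw [Set.mem_setOf_eq, filter_fin3, Finset.sum_singleton]

lemma eta3 (u : Fin 3 → ℕ) : ![u 0, u 1, u 2] = u := by
  funext i
  fin_cases i <;> rfl

lemma count_base (a0 a1 : ℕ) :
    (mySet 0 a0 a1).ncard = if a0 ≤ a1 then 2*a0+1 else 0 := by
  split_ifs with h
  · have hset : mySet 0 a0 a1 = (fun j => ![j, 2*a0 - j, a1 - a0]) '' Set.Iic (2*a0) := by
      ext u
      rw [mem_mySet_zero]
      constructor
      · rintro ⟨h1, h2⟩
        refine ⟨u 0, Set.mem_Iic.mpr (by omega), ?_⟩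
        show ![u 0, 2*a0 - u 0, a1 - a0] = u
        have e1 : 2*a0 - u 0 = u 1 := by omega
        have e2 : a1 - a0 = u 2 := by omega
        rw [e1, e2]
        exact eta3 u
      · rintro ⟨j, hj, rfl⟩
        have hj' : j ≤ 2*a0 := Set.mem_Iic.mp hj
        simp only [Matrix.cons_val_zero, Matrix.cons_val_one, Matrix.head_cons,
          Matrix.cons_val_two, Matrix.tail_cons]
        omega
    rw [hset, Set.ncard_image_of_injective _ ?_, ← Finset.coe_Iic, Set.ncard_coe_finset,
      Nat.card_Iic]
    intro a b hab
    have := congrFun hab 0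
    simpa using this
  · have hset : mySet 0 a0 a1 = ∅ := by
      ext u
      rw [mem_mySet_zero]
      simp only [Set.mem_empty_iff_false, iff_false, not_and]
      intro _
      omega
    rw [hset, Set.ncard_empty]

noncomputable def Sser (k : ℕ) : MvPowerSeries (Fin 2) ℤ := fun n => ((mySet k (n 0) (n 1)).ncard : ℤ)

def Aser : MvPowerSeries (Fin 2) ℤ := fun n => if n 0 = n 1 then 2*(n 0 : ℤ)+1 else 0

def Dser : MvPowerSeries (Fin 2) ℤ := fun n =>
  if n 0 = n 1 then (if n 0 = 0 then 1 else 2) else 0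

lemma coeff_apply' (φ : MvPowerSeries (Fin 2) ℤ) (n : Fin 2 →₀ ℕ) : coeff n φ = φ n := rfl

lemma coeff_mul_one_sub_X1 (φ : MvPowerSeries (Fin 2) ℤ) (n : Fin 2 →₀ ℕ) :
    coeff n (φ * (1 - X 1)) =
      coeff n φ - if 1 ≤ n 1 then coeff (n - Finsupp.single 1 1) φ else 0 := by
  rw [mul_sub, mul_one, map_sub, X, coeff_mul_monomial]
  simp only [Finsupp.single_le_iff, mul_one]

lemma muY : (X 0 * X 1 : MvPowerSeries (Fin 2) ℤ)
    = monomial (Finsupp.single 0 1 + Finsupp.single 1 1) 1 := by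
  rw [X, X, monomial_mul_monomial, mul_one]

lemma le_muY (n : Fin 2 →₀ ℕ) :
    (Finsupp.single (0 : Fin 2) 1 + Finsupp.single 1 1 ≤ n) ↔ 1 ≤ n 0 ∧ 1 ≤ n 1 := by
  rw [Finsupp.le_def]
  constructor
  · intro h
    have h0 := h 0; have h1 := h 1
    simp [Finsupp.single_apply] at h0 h1
    exact ⟨h0, h1⟩
  · intro ⟨h0, h1⟩ s
    match s with
    | 0 => simpa [Finsupp.single_apply] using h0
    | 1 => simpa [Finsupp.single_apply] using h1

lemma coeff_mul_one_sub_Y (φ : MvPowerSeries (Fin 2) ℤ) (n : Fin 2 →₀ ℕ) :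
    coeff n (φ * (1 - X 0 * X 1)) =
      coeff n φ - if 1 ≤ n 0 ∧ 1 ≤ n 1 then
        coeff (n - (Finsupp.single 0 1 + Finsupp.single 1 1)) φ else 0 := by
  rw [mul_sub, mul_one, map_sub, muY, coeff_mul_monomial]
  simp only [le_muY, mul_one]

lemma sub_apply0 (n : Fin 2 →₀ ℕ) : (n - Finsupp.single 1 1 : Fin 2 →₀ ℕ) 0 = n 0 := by
  rw [Finsupp.tsub_apply, Finsupp.single_apply]; simp

lemma sub_apply1 (n : Fin 2 →₀ ℕ) : (n - Finsupp.single 1 1 : Fin 2 →₀ ℕ) 1 = n 1 - 1 := by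
  rw [Finsupp.tsub_apply, Finsupp.single_apply]; simp

lemma subY_apply0 (n : Fin 2 →₀ ℕ) :
    (n - (Finsupp.single 0 1 + Finsupp.single 1 1) : Fin 2 →₀ ℕ) 0 = n 0 - 1 := by
  rw [Finsupp.tsub_apply, Finsupp.add_apply, Finsupp.single_apply, Finsupp.single_apply]; simp

lemma subY_apply1 (n : Fin 2 →₀ ℕ) :
    (n - (Finsupp.single 0 1 + Finsupp.single 1 1) : Fin 2 →₀ ℕ) 1 = n 1 - 1 := by
  rw [Finsupp.tsub_apply, Finsupp.add_apply, Finsupp.single_apply, Finsupp.single_apply]; simp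

lemma step (k : ℕ) : Sser (k+1) * (1 - X 1) = Sser k := by
  apply MvPowerSeries.ext
  intro n
  rw [coeff_mul_one_sub_X1, coeff_apply', coeff_apply', coeff_apply']
  unfold Sser
  rw [sub_apply0, sub_apply1]
  rcases hn : n 1 with _ | m
  · norm_num
    exact_mod_cast card_zero k (n 0)
  · rw [if_pos (by omega)]
    have := card_succ k (n 0) m
    have hm : m + 1 - 1 = m := rfl
    rw [hm]
    push_cast [this]
    ring

lemma base : Sser 0 * (1 - X 1) = Aser := by
  apply MvPowerSeries.ext
  intro n
  rw [coeff_mul_one_sub_X1, coeff_apply', coeff_apply', coeff_apply']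
  unfold Sser Aser
  rw [sub_apply0, sub_apply1, count_base, count_base]
  have h0 : n 0 = n 0 := rfl
  split_ifs <;> push_cast <;> omega

lemma chain (k : ℕ) : Sser k * (1 - X 1)^(k+1) = Aser := by
  induction k with
  | zero => simpa using base
  | succ k ih =>
    calc Sser (k+1) * (1 - X 1)^(k+2)
        = (Sser (k+1) * (1 - X 1)) * (1 - X 1)^(k+1) := by ring
      _ = Aser := by rw [step k, ih]

lemma AD : Aser * (1 - X 0 * X 1) = Dser := by
  apply MvPowerSeries.ext
  intro n
  rw [coeff_mul_one_sub_Y, coeff_apply', coeff_apply', coeff_apply']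
  unfold Aser Dser
  rw [subY_apply0, subY_apply1]
  split_ifs <;> push_cast <;> omega

lemma DE : Dser * (1 - X 0 * X 1) = 1 + X 0 * X 1 := by
  apply MvPowerSeries.ext
  intro n
  rw [coeff_mul_one_sub_Y, coeff_apply', coeff_apply', map_add, muY, coeff_monomial,
    MvPowerSeries.coeff_one]
  unfold Dser
  rw [subY_apply0, subY_apply1]
  have hzero : (n = 0) ↔ n 0 = 0 ∧ n 1 = 0 := by
    rw [Finsupp.ext_iff]
    constructor
    · intro h; exact ⟨h 0, h 1⟩
    · intro ⟨h0, h1⟩ s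
      match s with
      | 0 => simpa using h0
      | 1 => simpa using h1
  have hmu : (n = Finsupp.single 0 1 + Finsupp.single 1 1) ↔ n 0 = 1 ∧ n 1 = 1 := by
    rw [Finsupp.ext_iff]
    constructor
    · intro h
      have h0 := h 0; have h1 := h 1
      simp [Finsupp.single_apply] at h0 h1
      exact ⟨h0, h1⟩
    · intro ⟨h0, h1⟩ s
      match s with
      | 0 => simpa [Finsupp.single_apply] using h0
      | 1 => simpa [Finsupp.single_apply] using h1
  rcases Classical.em (n 0 = n 1) with h | h <;>
    simp only [hzero, hmu] <;> split_ifs <;> push_cast <;> omega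

/-- for the quadratic cone `y² = x₁x₂` in `ℂ^{d+1}`, `d = e + 3 > 2`, with
semigroup `Λ = {u ∈ ℤ_{≥0}^d : u₁ ≡ u₂ mod 2}` and the two essential monomial valuations
`⟨w₁,u⟩ = (u₁+u₂)/2` and `⟨w₂,u⟩ = (u₁+u₂)/2 + u₃ + ⋯ + u_d`, the two-variable Poincaré
series `∑_{u∈Λ} t₁^{⟨w₁,u⟩} t₂^{⟨w₂,u⟩}` equals `(1 − t₁²t₂²)/((1 − t₁t₂)³(1 − t₂)^{d−2})`,
i.e. `S · (1 − t₁t₂)³ (1 − t₂)^{d−2} = 1 − t₁²t₂²`. -/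
theorem stmt12 (e : ℕ) :
    (show MvPowerSeries (Fin 2) ℤ from fun a =>
        (Set.ncard {u : Fin (e + 3) → ℕ |
            u 0 + u 1 = 2 * a 0 ∧
            a 0 + ∑ i ∈ Finset.univ.filter (fun i : Fin (e + 3) => 2 ≤ (i : ℕ)), u i
              = a 1} : ℤ))
      * (1 - MvPowerSeries.X 0 * MvPowerSeries.X 1) ^ 3
      * (1 - MvPowerSeries.X 1) ^ (e + 1)
      = 1 - (MvPowerSeries.X 0) ^ 2 * (MvPowerSeries.X 1) ^ 2 := by
  show Sser e * (1 - X 0 * X 1) ^ 3 * (1 - X 1) ^ (e + 1)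
      = 1 - (X 0) ^ 2 * (X 1) ^ 2
  have h1 : Sser e * (1 - X 0 * X 1) ^ 3 * (1 - X 1) ^ (e + 1)
      = ((Sser e * (1 - X 1)^(e+1)) * (1 - X 0 * X 1) * (1 - X 0 * X 1)) * (1 - X 0 * X 1) := by
    ring
  rw [h1, chain, AD, DE]
  ring
end

section
/- Let R = ℂ[[Λ]] for Λ ⊂ ℤ_{≥0}^d a finitely generated semigroup, and let ν be the monomial valuation defined by v ∈ ℤ_{>0}^d. Let w ∈ ℤ_{≥0}^d define another monomial valuation ω. For a nonzero homogeneous element h̄ ∈ I(a)/I(a+1) of the associated graded ring gr_ν R, define ω̄(h̄) = max{ω(h) : h ∈ R, h ≡ h̄ mod I(a+1)}. Then ω̄(h̄) = ω(h_{|v}) where h_{|v} is the weight-a (with respect to v) homogeneous part of any representative h of h̄ with ν(h) = a; in particular the maximum is attained. -/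
/-- The weight `⟨v,u⟩`. -/
def stmt17wt (d : ℕ) (v : Fin d → ℕ) (u : Fin d →₀ ℕ) : ℕ := ∑ i, v i * u i

/-- The monomial valuation associated to `v`. -/
noncomputable def stmt17val (d : ℕ) (v : Fin d → ℕ) (φ : MvPowerSeries (Fin d) ℂ) : ℕ :=
  sInf {k | ∃ u, MvPowerSeries.coeff u φ ≠ 0 ∧ stmt17wt d v u = k}

open Classical in
/-- The initial form `h_{|v}`: the sum of the terms of `h` of minimal `v`-weight
(the symbolic restriction to the face of the Newton polyhedron defined by `v`). -/
noncomputable def stmt17init (d : ℕ) (v : Fin d → ℕ) (h : MvPowerSeries (Fin d) ℂ) :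
    MvPowerSeries (Fin d) ℂ :=
  fun u => if stmt17wt d v u = stmt17val d v h then MvPowerSeries.coeff u h else 0

/-- in `R = ℂ[[Λ]]` (power series supported on the semigroup `Λ`), for the
monomial valuations `ν` (of `v ∈ ℤ_{>0}^d`) and `ω` (of `w`), and a nonzero `h ∈ R` with
`ν(h) = a`, the maximum of `ω` over representatives of the class of `h` in `I(a)/I(a+1)`
is attained and equals `ω(h_{|v})`. -/
theorem stmt17 (d : ℕ) (Λ : AddSubmonoid (Fin d →₀ ℕ)) (v w : Fin d → ℕ)
    (hv : ∀ i, 0 < v i) (h : MvPowerSeries (Fin d) ℂ) (hh : h ≠ 0)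
    (hsupp : ∀ u, MvPowerSeries.coeff u h ≠ 0 → u ∈ Λ)
    (a : ℕ) (ha : stmt17val d v h = a) :
    IsGreatest
      {k : ℕ | ∃ φ : MvPowerSeries (Fin d) ℂ, φ ≠ 0 ∧
        (∀ u, MvPowerSeries.coeff u φ ≠ 0 → u ∈ Λ) ∧
        (∀ u, stmt17wt d v u ≤ a → MvPowerSeries.coeff u φ = MvPowerSeries.coeff u h) ∧
        stmt17val d w φ = k}
      (stmt17val d w (stmt17init d v h)) := by
  classical
  have hcoeff : ∀ u, MvPowerSeries.coeff u (stmt17init d v h) =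
      if stmt17wt d v u = stmt17val d v h then MvPowerSeries.coeff u h else 0 :=
    fun u => rfl
  -- the defining set for ν(h) is nonempty
  have hne : {k | ∃ u, MvPowerSeries.coeff u h ≠ 0 ∧ stmt17wt d v u = k}.Nonempty := by
    obtain ⟨u, hu⟩ : ∃ u, MvPowerSeries.coeff u h ≠ 0 := by
      by_contra hc; push_neg at hc
      exact hh (MvPowerSeries.ext fun u => by simpa using hc u)
    exact ⟨_, u, hu, rfl⟩
  -- support of h has weights ≥ a
  have hge : ∀ u, MvPowerSeries.coeff u h ≠ 0 → a ≤ stmt17wt d v u := by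
    intro u hu
    rw [← ha]
    exact Nat.sInf_le ⟨u, hu, rfl⟩
  -- a is attained
  obtain ⟨u₀, hu₀, hw₀⟩ : ∃ u, MvPowerSeries.coeff u h ≠ 0 ∧ stmt17wt d v u = a := by
    have := Nat.sInf_mem hne
    rw [show sInf _ = a from ha] at this
    exact this
  have hinit0 : MvPowerSeries.coeff u₀ (stmt17init d v h) ≠ 0 := by
    rw [hcoeff, ha, if_pos hw₀]; exact hu₀
  -- the defining set for ω(init h) is nonempty, attained at some u₁
  have hne' : {k | ∃ u, MvPowerSeries.coeff u (stmt17init d v h) ≠ 0 ∧ stmt17wt d w u = k}.Nonempty :=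
    ⟨_, u₀, hinit0, rfl⟩
  obtain ⟨u₁, hu₁, hw₁⟩ := Nat.sInf_mem hne'
  have hu₁h : MvPowerSeries.coeff u₁ h ≠ 0 ∧ stmt17wt d v u₁ = a := by
    rw [hcoeff, ha] at hu₁
    by_cases hc : stmt17wt d v u₁ = a
    · rw [if_pos hc] at hu₁; exact ⟨hu₁, hc⟩
    · rw [if_neg hc] at hu₁; exact absurd rfl hu₁
  constructor
  · -- membership: φ = init h works
    refine ⟨stmt17init d v h, ?_, ?_, ?_, rfl⟩
    · intro hz; rw [hz] at hinit0; simp at hinit0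
    · intro u hu
      rw [hcoeff] at hu
      by_cases hc : stmt17wt d v u = stmt17val d v h
      · rw [if_pos hc] at hu; exact hsupp u hu
      · rw [if_neg hc] at hu; exact absurd rfl hu
    · intro u hu
      rw [hcoeff, ha]
      rcases eq_or_lt_of_le hu with he | hl
      · rw [if_pos he]
      · rw [if_neg (ne_of_lt hl)]
        by_contra hc
        exact absurd (hge u fun h0 => hc h0.symm) (not_le.mpr hl)
  · -- upper bound
    rintro k ⟨φ, hφ0, hφΛ, hφh, rfl⟩
    have : MvPowerSeries.coeff u₁ φ ≠ 0 := by
      rw [hφh u₁ (le_of_eq hu₁h.2)]; exact hu₁h.1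
    calc stmt17val d w φ ≤ stmt17wt d w u₁ := Nat.sInf_le ⟨u₁, this, rfl⟩
      _ = stmt17val d w (stmt17init d v h) := hw₁
end
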